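/- Let X be a locally compact Hausdorff space and let μ be a deficient topological measure on X that is finitely subadditive on open sets (μ(U ∪ V) ≤ μ(U) + μ(V) for all open U, V). Then μ admits a unique extension to a Borel measure m on the Borel σ-algebra of X that is outer regular on all Borel sets (m(E) = inf{m(U) : E ⊆ U, U open}) and inner regular on open sets (m(U) = sup{m(K) : K ⊆ U, K compact}), with m(A) = μ(A) for every open or closed set A. Moreover m is compact-finite (hence a Radon measure) if and only if μ is compact-finite. -/

import Mathlib

open Set Classical
open scoped ENNReal NNReal

variable {X : Type*}

/-- A deficient topological measure on a locally compact space `X`: a set function on open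
and closed subsets of `X` with values in `[0,∞]`, not identically `∞`, finitely additive on
compact sets, inner compact regular on open sets, and outer regular on closed sets.
(Values on sets that are neither open nor closed are irrelevant.) -/
def IsDTM [TopologicalSpace X] (ν : Set X → ℝ≥0∞) : Prop :=
  (∃ A : Set X, (IsOpen A ∨ IsClosed A) ∧ ν A ≠ ⊤) ∧
  (∀ C K : Set X, IsCompact C → IsCompact K → Disjoint C K → ν (C ∪ K) = ν C + ν K) ∧
  (∀ U : Set X, IsOpen U → ν U = ⨆ (K : Set X) (_ : IsCompact K ∧ K ⊆ U), ν K) ∧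
  (∀ F : Set X, IsClosed F → ν F = ⨅ (U : Set X) (_ : IsOpen U ∧ F ⊆ U), ν U)

open MeasureTheory

/-- Theorem 4.6: a deficient topological measure `μ` on a locally compact Hausdorff space
that is finitely subadditive on open sets admits a unique extension to a Borel measure `m`
that is outer regular on all Borel sets and inner compact regular on open sets; `m` agrees
with `μ` on open and closed sets, and `m` is compact-finite (hence a Radon measure) iff `μ`
is compact-finite. -/
theorem dtm_subadditive_extends_to_measure
    [TopologicalSpace X] [LocallyCompactSpace X] [T2Space X]
    [MeasurableSpace X] [BorelSpace X]
    (μ : Set X → ℝ≥0∞) (hμ : IsDTM μ)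
    (hsub : ∀ U V : Set X, IsOpen U → IsOpen V → μ (U ∪ V) ≤ μ U + μ V) :
    ∃ m : Measure X,
      (∀ E : Set X, MeasurableSet E →
        m E = ⨅ (U : Set X) (_ : IsOpen U ∧ E ⊆ U), m U) ∧
      (∀ U : Set X, IsOpen U →
        m U = ⨆ (K : Set X) (_ : IsCompact K ∧ K ⊆ U), m K) ∧
      (∀ A : Set X, IsOpen A ∨ IsClosed A → m A = μ A) ∧
      (∀ m₂ : Measure X,
        (∀ E : Set X, MeasurableSet E →
          m₂ E = ⨅ (U : Set X) (_ : IsOpen U ∧ E ⊆ U), m₂ U) →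
        (∀ U : Set X, IsOpen U →
          m₂ U = ⨆ (K : Set X) (_ : IsCompact K ∧ K ⊆ U), m₂ K) →
        (∀ A : Set X, IsOpen A ∨ IsClosed A → m₂ A = μ A) →
        ∀ E : Set X, MeasurableSet E → m₂ E = m E) ∧
      ((∀ K : Set X, IsCompact K → m K ≠ ⊤) ↔ (∀ K : Set X, IsCompact K → μ K ≠ ⊤)) := by
  obtain ⟨⟨A, hA, hAfin⟩, hadd, hreg, hout⟩ := hμ
  -- monotonicity: compact inside open
  have hKU : ∀ K U : Set X, IsCompact K → IsOpen U → K ⊆ U → μ K ≤ μ U := by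
    intro K U hK hU hKsub
    rw [hout K hK.isClosed]
    exact iInf₂_le U ⟨hU, hKsub⟩
  -- monotonicity on opens
  have hmono : ∀ U V : Set X, IsOpen U → IsOpen V → U ⊆ V → μ U ≤ μ V := by
    intro U V hU hV hUV
    rw [hreg U hU]
    exact iSup₂_le fun K hK => hKU K V hK.1 hV (hK.2.trans hUV)
  -- an open set of finite measure
  have hfinU : ∃ U : Set X, IsOpen U ∧ μ U ≠ ⊤ := by
    rcases hA with hAo | hAc
    · exact ⟨A, hAo, hAfin⟩
    · by_contra h
      push_neg at h
      apply hAfin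
      rw [hout A hAc, eq_top_iff]
      exact le_iInf₂ fun U hU => (h U hU.1).ge
  have hempty : μ ∅ = 0 := by
    obtain ⟨U, hU, hUfin⟩ := hfinU
    have hfin : μ (∅ : Set X) ≠ ⊤ :=
      fun h => hUfin (top_le_iff.1 (h ▸ hKU ∅ U isCompact_empty hU (empty_subset U)))
    have h2 : μ (∅ : Set X) + μ ∅ = μ ∅ + 0 := by
      rw [add_zero]
      have := hadd ∅ ∅ isCompact_empty isCompact_empty (disjoint_bot_left)
      simpa using this.symm
    exact (ENNReal.add_right_inj hfin).1 h2
  -- finite subadditivity over finsets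
  have hfinsub : ∀ (U : ℕ → Set X), (∀ n, IsOpen (U n)) → ∀ t : Finset ℕ,
      μ (⋃ i ∈ t, U i) ≤ ∑ i ∈ t, μ (U i) := by
    intro U hop t
    induction t using Finset.induction_on with
    | empty => simp [hempty]
    | @insert a s ha ih =>
      rw [Finset.set_biUnion_insert, Finset.sum_insert ha]
      exact le_trans (hsub _ _ (hop a) (isOpen_biUnion fun i _ => hop i))
        (add_le_add le_rfl ih)
  -- countable subadditivity on opens
  have hcount : ∀ (U : ℕ → Set X), (∀ n, IsOpen (U n)) →
      μ (⋃ n, U n) ≤ ∑' n, μ (U n) := by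
    intro U hop
    rw [hreg _ (isOpen_iUnion hop)]
    refine iSup₂_le fun K hK => ?_
    obtain ⟨t, ht⟩ := hK.1.elim_finite_subcover U hop hK.2
    calc μ K ≤ μ (⋃ i ∈ t, U i) :=
          hKU K _ hK.1 (isOpen_biUnion fun i _ => hop i) ht
      _ ≤ ∑ i ∈ t, μ (U i) := hfinsub U hop t
      _ ≤ ∑' i, μ (U i) := ENNReal.sum_le_tsum t

  -- the outer measure
  set f : Set X → ℝ≥0∞ := fun s => if IsOpen s then μ s else ⊤ with hf
  have hf0 : f ∅ = 0 := by simp [hf, hempty]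
  set M : OuterMeasure X := OuterMeasure.ofFunction f hf0 with hM
  have key : ∀ E : Set X, M E = ⨅ (U : Set X) (_ : IsOpen U ∧ E ⊆ U), μ U := by
    intro E
    apply le_antisymm
    · refine le_iInf₂ fun U hU => ?_
      calc M E ≤ M U := M.mono hU.2
        _ ≤ f U := OuterMeasure.ofFunction_le U
        _ = μ U := by simp [hf, hU.1]
    · rw [hM, OuterMeasure.ofFunction_apply]
      refine le_iInf₂ fun t ht => ?_
      by_cases hop : ∀ n, IsOpen (t n)
      · refine le_trans (iInf₂_le (⋃ n, t n) ⟨isOpen_iUnion hop, ht⟩) ?_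
        refine le_trans (hcount t hop) ?_
        exact ENNReal.tsum_le_tsum fun n => by simp [hf, hop n]
      · push_neg at hop
        obtain ⟨n, hn⟩ := hop
        have : f (t n) = ⊤ := by simp [hf, hn]
        refine le_trans ?_ (ENNReal.le_tsum n)
        rw [this]
        exact le_top
  have mopen : ∀ U : Set X, IsOpen U → M U = μ U := by
    intro U hU
    rw [key U]
    exact le_antisymm (iInf₂_le U ⟨hU, subset_rfl⟩)
      (le_iInf₂ fun V hV => hmono U V hU hV.1 hV.2)
  have mclosed : ∀ F : Set X, IsClosed F → M F = μ F := by
    intro F hF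
    rw [key F, hout F hF]
  -- The Caratheodory step
  have step2 : ∀ (V K : Set X), IsOpen V → IsCompact K → K ⊆ V → μ K + μ (V \ K) ≤ μ V := by
    intro V K hV hK hKV
    rw [hreg (V \ K) (hV.sdiff hK.isClosed), ENNReal.add_iSup]
    refine iSup_le fun K' => ?_
    by_cases hP : IsCompact K' ∧ K' ⊆ V \ K
    · rw [iSup_pos hP]
      have hdisj : Disjoint K K' := by
        refine Set.disjoint_left.2 fun x hx hx' => ?_
        exact (hP.2 hx').2 hx
      rw [← hadd K K' hK hP.1 hdisj]
      exact hKU _ V (hK.union hP.1) hV (union_subset hKV (hP.2.trans diff_subset))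
    · rw [iSup_neg hP, bot_eq_zero, add_zero]
      exact hKU K V hK hV hKV
  have core : ∀ (V U : Set X), IsOpen V → IsOpen U → μ (V ∩ U) + M (V \ U) ≤ μ V := by
    intro V U hV hU
    rw [hreg (V ∩ U) (hV.inter hU),
      ENNReal.biSup_add' ⟨∅, isCompact_empty, empty_subset _⟩]
    refine iSup₂_le fun K hK => ?_
    have h1 : M (V \ U) ≤ μ (V \ K) := by
      rw [← mopen _ (hV.sdiff hK.1.isClosed)]
      exact M.mono (diff_subset_diff_right (hK.2.trans inter_subset_right))
    calc μ K + M (V \ U) ≤ μ K + μ (V \ K) := add_le_add le_rfl h1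
      _ ≤ μ V := step2 V K hV hK.1 (hK.2.trans inter_subset_left)
  have hcar : ∀ U : Set X, IsOpen U → MeasurableSet[M.caratheodory] U := by
    intro U hU
    rw [OuterMeasure.isCaratheodory_iff_le]
    intro t
    rw [key t]
    refine le_iInf₂ fun V hV => ?_
    calc M (t ∩ U) + M (t \ U)
        ≤ M (V ∩ U) + M (V \ U) :=
          add_le_add (M.mono (inter_subset_inter_left _ hV.2))
            (M.mono (diff_subset_diff_left hV.2))
      _ = μ (V ∩ U) + M (V \ U) := by rw [mopen _ (hV.1.inter hU)]
      _ ≤ μ V := core V U hV.1 hU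
  have hle : ‹MeasurableSpace X› ≤ M.caratheodory := by
    rw [BorelSpace.measurable_eq (α := X)]
    exact MeasurableSpace.generateFrom_le fun U hU => hcar U hU
  set m : Measure X := M.toMeasure hle with hm
  have mval : ∀ E : Set X, MeasurableSet E → m E = M E := fun E hE =>
    toMeasure_apply M hle hE
  have heq : ∀ A : Set X, IsOpen A ∨ IsClosed A → m A = μ A := by
    intro A hA
    rcases hA with h | h
    · rw [mval A h.measurableSet, mopen A h]
    · rw [mval A h.measurableSet, mclosed A h]
  refine ⟨m, ?_, ?_, heq, ?_, ?_⟩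
  · intro E hE
    rw [mval E hE, key E]
    refine iInf_congr fun U => ?_
    by_cases h : IsOpen U ∧ E ⊆ U
    · rw [iInf_pos h, iInf_pos h, heq U (Or.inl h.1)]
    · rw [iInf_neg h, iInf_neg h]
  · intro U hU
    rw [heq U (Or.inl hU), hreg U hU]
    refine iSup_congr fun K => ?_
    by_cases h : IsCompact K ∧ K ⊆ U
    · rw [iSup_pos h, iSup_pos h, heq K (Or.inr h.1.isClosed)]
    · rw [iSup_neg h, iSup_neg h]
  · intro m₂ hout₂ _ hagree E hE
    rw [hout₂ E hE, mval E hE, key E]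
    refine iInf_congr fun U => ?_
    by_cases h : IsOpen U ∧ E ⊆ U
    · rw [iInf_pos h, iInf_pos h, hagree U (Or.inl h.1)]
    · rw [iInf_neg h, iInf_neg h]
  · constructor <;> intro h K hK
    · rw [← heq K (Or.inr hK.isClosed)]
      exact h K hK
    · rw [heq K (Or.inr hK.isClosed)]
      exact h K hK
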